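/- Let a > b ≥ 1 be integers, N = a − b, and let u : ℝ → ℂ be any function. Let X = T_{a/N} − M_u ∘ T_{b/N} as a linear operator on complex-valued functions on ℝ. Then there exist functions c_b, c_{b+1}, …, c_a : ℝ → ℂ such that X^N = Σ_{n=b}^{a} M_{c_n} ∘ T_n, where moreover c_a is identically 1 and c_b(s) = (−1)^N ∏_{k=0}^{N−1} u(s + k b/N). In particular X^N involves only positive integer shifts, all lying between b and a. -/

import Mathlib

def Tshift (α : ℝ) : Module.End ℂ (ℝ → ℂ) where
  toFun f := fun s => f (s + α)
  map_add' := by intros; rfl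
  map_smul' := by intros; rfl

def Mmult (g : ℝ → ℂ) : Module.End ℂ (ℝ → ℂ) where
  toFun f := fun s => g s * f s
  map_add' := by intros; funext s; simp [mul_add]
  map_smul' := by intros; funext s; simp [smul_eq_mul]; ring

lemma Mmult_Tshift_mul (g h : ℝ → ℂ) (γ δ : ℝ) :
    (Mmult g * Tshift γ) * (Mmult h * Tshift δ)
      = Mmult (fun s => g s * h (s + γ)) * Tshift (γ + δ) := by
  ext f s
  simp [Mmult, Tshift, Module.End.mul_apply, mul_assoc, add_assoc]

lemma Tshift_mul (γ : ℝ) (h : ℝ → ℂ) (δ : ℝ) :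
    Tshift γ * (Mmult h * Tshift δ)
      = Mmult (fun s => h (s + γ)) * Tshift (γ + δ) := by
  ext f s
  simp [Mmult, Tshift, Module.End.mul_apply, add_assoc]

lemma Mmult_sub (g h : ℝ → ℂ) :
    Mmult (fun s => g s - h s) = Mmult g - Mmult h := by
  ext f s
  simp [Mmult, sub_mul]

lemma Mmult_zero : Mmult (fun _ => (0:ℂ)) = 0 := by
  ext f s; simp [Mmult]

lemma Mmult_one_Tshift_zero : Mmult (fun _ => (1:ℂ)) * Tshift 0 = 1 := by
  ext f s; simp [Mmult, Tshift, Module.End.mul_apply]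

noncomputable def Dc (u : ℝ → ℂ) (α β : ℝ) : ℕ → ℕ → ℝ → ℂ
  | 0, 0 => fun _ => 1
  | 0, _+1 => fun _ => 0
  | m+1, 0 => fun s => Dc u α β m 0 (s + α)
  | m+1, j+1 => fun s => Dc u α β m (j+1) (s + α) - u s * Dc u α β m j (s + β)

lemma Dc_gt (u : ℝ → ℂ) (α β : ℝ) : ∀ m j, m < j → Dc u α β m j = fun _ => 0 := by
  intro m
  induction m with
  | zero => intro j hj; match j, hj with | j+1, _ => rfl
  | succ m ih =>
    intro j hj
    match j, hj with
    | j+1, hj =>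
      funext s
      show Dc u α β m (j+1) (s + α) - u s * Dc u α β m j (s + β) = 0
      rw [ih _ (by omega), ih _ (by omega)]; simp

lemma Dc_zero' (u : ℝ → ℂ) (α β : ℝ) : ∀ m, Dc u α β m 0 = fun _ => 1 := by
  intro m
  induction m with
  | zero => rfl
  | succ m ih =>
    funext s
    show Dc u α β m 0 (s + α) = 1
    rw [ih]

lemma Dc_diag (u : ℝ → ℂ) (α β : ℝ) :
    ∀ m s, Dc u α β m m s = (-1)^m * ∏ k ∈ Finset.range m, u (s + k * β) := by
  intro m
  induction m with
  | zero => intro s; simp [Dc]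
  | succ m ih =>
    intro s
    show Dc u α β m (m+1) (s + α) - u s * Dc u α β m m (s + β) = _
    rw [Dc_gt u α β m (m+1) (by omega), ih]
    have hp : ∏ k ∈ Finset.range m, u (s + β + ↑k * β)
        = ∏ k ∈ Finset.range m, u (s + (↑k + 1) * β) := by
      refine Finset.prod_congr rfl fun k _ => ?_
      congr 1; ring
    show (0:ℂ) - u s * ((-1)^m * ∏ k ∈ Finset.range m, u (s + β + ↑k * β)) = _
    rw [hp, Finset.prod_range_succ']
    push_cast
    simp only [zero_mul, add_zero]
    ring

lemma pow_expand (u : ℝ → ℂ) (α : ℝ) (m : ℕ) :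
    (Tshift α - Mmult u * Tshift (α - 1)) ^ m
      = ∑ j ∈ Finset.range (m+1),
          Mmult (Dc u α (α-1) m j) * Tshift (m * α - j) := by
  induction m with
  | zero =>
    rw [Finset.sum_range_one]
    norm_num
    rw [show Dc u α (α-1) 0 0 = fun _ => (1:ℂ) from rfl]
    exact Mmult_one_Tshift_zero.symm
  | succ m ih =>
    set G : ℕ → Module.End ℂ (ℝ → ℂ) :=
      fun j => Mmult (fun s => Dc u α (α-1) m j (s + α)) *
        Tshift ((m:ℝ) * α + α - j) with hGdef
    set H : ℕ → Module.End ℂ (ℝ → ℂ) :=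
      fun j => Mmult (fun s => u s * Dc u α (α-1) m j (s + (α-1))) *
        Tshift ((m:ℝ) * α + α - j - 1) with hHdef
    have hL : (Tshift α - Mmult u * Tshift (α-1)) ^ (m+1)
        = ∑ j ∈ Finset.range (m+1), G j - ∑ j ∈ Finset.range (m+1), H j := by
      rw [pow_succ', ih, sub_mul, Finset.mul_sum, Finset.mul_sum]
      congr 1
      · refine Finset.sum_congr rfl fun j _ => ?_
        rw [Tshift_mul]
        simp only [hGdef]
        congr 1
        ring
      · refine Finset.sum_congr rfl fun j _ => ?_
        rw [Mmult_Tshift_mul]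
        simp only [hHdef]
        congr 1
        ring
    rw [hL]
    have hsplit : ∀ j, Mmult (Dc u α (α-1) (m+1) (j+1)) *
          Tshift ((↑(m+1):ℝ) * α - ↑(j+1)) = G (j+1) - H j := by
      intro j
      have hd : Dc u α (α-1) (m+1) (j+1)
          = fun s => Dc u α (α-1) m (j+1) (s + α)
              - u s * Dc u α (α-1) m j (s + (α-1)) := rfl
      rw [hd, Mmult_sub, sub_mul]
      simp only [hGdef, hHdef]
      congr 2 <;> push_cast <;> ring
    have hF0 : Mmult (Dc u α (α-1) (m+1) 0) * Tshift ((↑(m+1):ℝ) * α - ↑(0:ℕ)) = G 0 := by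
      have hd : Dc u α (α-1) (m+1) 0 = fun s => Dc u α (α-1) m 0 (s + α) := rfl
      rw [hd]
      simp only [hGdef]
      congr 1
      push_cast; ring
    have htop : G (m+1) = 0 := by
      simp only [hGdef]
      rw [show (fun s => Dc u α (α-1) m (m+1) (s + α)) = fun _ => (0:ℂ) by
        funext s; rw [Dc_gt u α (α-1) m (m+1) (by omega)]]
      rw [Mmult_zero, zero_mul]
    calc ∑ j ∈ Finset.range (m+1), G j - ∑ j ∈ Finset.range (m+1), H j
        = (∑ j ∈ Finset.range (m+1), (G (j+1) - H j)) +
            (Mmult (Dc u α (α-1) (m+1) 0) * Tshift ((↑(m+1):ℝ) * α - ↑(0:ℕ))) := by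
          rw [hF0, Finset.sum_sub_distrib, Finset.sum_range_succ' G m,
            Finset.sum_range_succ (fun j => G (j+1)) m, htop]
          abel
      _ = ∑ j ∈ Finset.range (m+1+1),
            Mmult (Dc u α (α-1) (m+1) j) * Tshift ((↑(m+1):ℝ) * α - ↑j) := by
          rw [Finset.sum_range_succ' _ (m+1)]
          congr 1
          refine Finset.sum_congr rfl fun j _ => (hsplit j).symm

/-- For `X = T_{a/N} − M_u ∘ T_{b/N}` with `N = a − b` (a > b ≥ 1), the power
`X^N` involves only the positive integer shifts `b, …, a`:
`X^N = Σ_{n=b}^{a} M_{c_n} ∘ T_n` with `c_a ≡ 1` and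
`c_b(s) = (−1)^N ∏_{k=0}^{N−1} u(s + k b/N)`. -/
theorem GD_power_integer_shifts (a b : ℕ) (hb : 1 ≤ b) (hab : b < a)
    (u : ℝ → ℂ) :
    ∃ c : ℕ → ℝ → ℂ,
      (Tshift ((a : ℝ) / ((a : ℝ) - (b : ℝ))) -
         Mmult u * Tshift ((b : ℝ) / ((a : ℝ) - (b : ℝ)))) ^ (a - b)
        = ∑ n ∈ Finset.Icc b a, Mmult (c n) * Tshift (n : ℝ) ∧
      (∀ s : ℝ, c a s = 1) ∧
      (∀ s : ℝ, c b s
        = (-1) ^ (a - b) *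
            ∏ k ∈ Finset.range (a - b),
              u (s + (k : ℝ) * (b : ℝ) / ((a : ℝ) - (b : ℝ)))) := by
  have hNr : ((a - b : ℕ) : ℝ) = (a : ℝ) - (b : ℝ) := by
    push_cast [Nat.cast_sub hab.le]; ring
  have hNne : ((a : ℝ) - (b : ℝ)) ≠ 0 := by
    rw [← hNr]
    have h1 : a - b ≠ 0 := by omega
    exact_mod_cast h1
  set α := (a : ℝ) / ((a : ℝ) - (b : ℝ)) with hα
  have hβ : (b : ℝ) / ((a : ℝ) - (b : ℝ)) = α - 1 := by
    rw [hα]; field_simp; ring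
  refine ⟨fun n => Dc u α (α - 1) (a - b) (a - n), ?_, ?_, ?_⟩
  · rw [hβ, pow_expand u α (a - b)]
    refine Finset.sum_nbij' (fun j => a - j) (fun n => a - n) ?_ ?_ ?_ ?_ ?_
    · intro j hj
      simp only [Finset.mem_range] at hj
      show a - j ∈ Finset.Icc b a
      simp only [Finset.mem_Icc]
      omega
    · intro n hn
      simp only [Finset.mem_Icc] at hn
      show a - n ∈ Finset.range (a - b + 1)
      simp only [Finset.mem_range]
      omega
    · intro j hj
      simp only [Finset.mem_range] at hj
      show a - (a - j) = j
      omega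
    · intro n hn
      simp only [Finset.mem_Icc] at hn
      show a - (a - n) = n
      omega
    · intro j hj
      simp only [Finset.mem_range] at hj
      have hja : j ≤ a := by omega
      have harg : ((a - b : ℕ):ℝ) * α - (j:ℝ) = ((a - j : ℕ):ℝ) := by
        rw [hα, show ((a - b : ℕ):ℝ) * ((a:ℝ) / ((a:ℝ)-(b:ℝ))) = (a:ℝ) by
          rw [hNr]; field_simp]
        push_cast [Nat.cast_sub hja]
        ring
      show Mmult (Dc u α (α - 1) (a - b) j) * Tshift (((a - b : ℕ):ℝ) * α - (j:ℝ))
          = Mmult (Dc u α (α - 1) (a - b) (a - (a - j))) * Tshift (((a - j : ℕ):ℝ))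
      rw [show a - (a - j) = j from by omega, harg]
  · intro s
    show Dc u α (α - 1) (a - b) (a - a) s = 1
    rw [Nat.sub_self, Dc_zero' u α (α-1) (a-b)]
  · intro s
    show Dc u α (α - 1) (a - b) (a - b) s = _
    rw [Dc_diag u α (α-1) (a-b) s]
    congr 1
    refine Finset.prod_congr rfl fun k _ => ?_
    congr 1
    rw [← hβ]
    ring
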